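/- Let Q be an abelian group and let q ∈ Q be a non-zero element such that every non-trivial subgroup of Q contains q. Then there exists an injective group homomorphism from Q into the circle group ℝ/ℤ. -/

import Mathlib

/-- If `Q` is an abelian group with a non-zero element `q` contained in every non-trivial
subgroup of `Q`, then `Q` embeds into the circle group `ℝ/ℤ`. -/
theorem embeds_in_circle_of_min_element {Q : Type*} [AddCommGroup Q]
    (q : Q) (hq : q ≠ 0) (hmin : ∀ S : AddSubgroup Q, S ≠ ⊥ → q ∈ S) :
    ∃ θ : Q →+ AddCircle (1 : ℝ), Function.Injective θ := by
  obtain ⟨c, hc⟩ := CharacterModule.exists_character_apply_ne_zero_of_ne_zero hq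
  -- c : Q →+ AddCircle (1 : ℚ), injective since its kernel misses q
  have hcinj : Function.Injective c := by
    apply (AddMonoidHom.ker_eq_bot_iff (show Q →+ AddCircle (1 : ℚ) from c)).mp
    by_contra h
    exact hc (AddMonoidHom.mem_ker.mp (hmin _ h))
  -- the cast map AddCircle (1:ℚ) →+ AddCircle (1:ℝ)
  let f : AddCircle (1 : ℚ) →+ AddCircle (1 : ℝ) :=
    QuotientAddGroup.map _ _ (Rat.castHom ℝ).toAddMonoidHom (by
      rintro x ⟨n, rfl⟩
      exact ⟨n, by push_cast; simp⟩)
  have hfinj : Function.Injective f := by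
    rw [← AddMonoidHom.ker_eq_bot_iff, eq_bot_iff]
    rintro ⟨x⟩ hx
    have : ((x : ℚ) : ℝ) ∈ AddSubgroup.zmultiples (1 : ℝ) := by
      have h2 : (((x : ℚ) : ℝ) : AddCircle (1 : ℝ)) = 0 := AddMonoidHom.mem_ker.mp hx
      exact (QuotientAddGroup.eq_zero_iff _).mp h2
    obtain ⟨n, hn⟩ := this
    have : x = (n : ℚ) := by
      have : ((x : ℚ) : ℝ) = ((n : ℚ) : ℝ) := by push_cast at hn ⊢; simpa using hn.symm
      exact_mod_cast this
    show (x : AddCircle (1 : ℚ)) ∈ (⊥ : AddSubgroup _)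
    simp only [AddSubgroup.mem_bot]
    rw [show ((x : AddCircle (1:ℚ))) = QuotientAddGroup.mk x from rfl,
      QuotientAddGroup.eq_zero_iff]
    exact ⟨n, by simp [this]⟩
  exact ⟨f.comp c, hfinj.comp hcinj⟩
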